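/- In the free product with amalgamation G = F₁ *_{U=V} F₂ where U = gⁿ (n > 1) in the free group F₁ and V = hᵐ (m > 1) in the free group F₂, the subgroup H generated by gⁿ and gh is free abelian of rank 2. -/

import Mathlib

namespace CPAux
open FreeGroup List

variable {α : Type} [DecidableEq α]

def NC (x y : α × Bool) : Prop := ¬(x.1 = y.1 ∧ x.2 = !y.2)

lemma reduce_eq_self_iff (L : List (α × Bool)) :
    FreeGroup.reduce L = L ↔ List.Chain' NC L := by
  induction L with
  | nil => simp [List.Chain']
  | cons x L ih =>
    constructor
    · intro hr
      rw [FreeGroup.reduce.cons] at hr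
      rcases hL : FreeGroup.reduce L with _ | ⟨y, t⟩
      · rw [hL] at hr
        replace hr : [x] = x :: L := hr
        have : L = [] := by injection hr with _ h2; exact h2.symm
        subst this; simp [List.Chain']
      · rw [hL] at hr
        replace hr : (if x.1 = y.1 ∧ x.2 = !y.2 then t else x :: y :: t) = x :: L := hr
        split_ifs at hr with hc
        · exfalso
          have hlen : (FreeGroup.reduce L).length ≤ L.length :=
            (FreeGroup.Red.length_le (FreeGroup.reduce.red))
          rw [hL, hr] at hlen
          simp at hlen
        · have hteq : L = y :: t := by injection hr with _ h2; exact h2.symm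
          have hred : FreeGroup.reduce L = L := by rw [hL, hteq]
          have hchain := ih.mp hred
          rw [hteq]
          exact List.isChain_cons_cons.mpr ⟨hc, hteq ▸ hchain⟩
    · intro hch
      have hred : FreeGroup.reduce L = L := ih.mpr hch.tail
      rw [FreeGroup.reduce.cons, hred]
      cases L with
      | nil => rfl
      | cons y t =>
        have hnc : ¬(x.1 = y.1 ∧ x.2 = !y.2) := (List.isChain_cons_cons.mp hch).1
        show (if x.1 = y.1 ∧ x.2 = !y.2 then t else x :: y :: t) = x :: y :: t
        rw [if_neg hnc]

lemma chain'_toWord (x : FreeGroup α) : List.Chain' NC x.toWord :=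
  (reduce_eq_self_iff _).mp (FreeGroup.reduce_toWord x)

end CPAux

namespace CPAux
variable {α : Type} [DecidableEq α]

lemma exists_cr : ∀ (N : ℕ) (x : FreeGroup α), x.toWord.length ≤ N → x ≠ 1 →
    ∃ w c : FreeGroup α, x = w * c * w⁻¹ ∧ c ≠ 1 ∧
      List.Chain' NC (c.toWord ++ c.toWord) := by
  intro N
  induction N with
  | zero =>
    intro x hlen hx
    exact absurd (FreeGroup.toWord_eq_nil_iff.mp (List.eq_nil_of_length_eq_zero (by omega))) hx
  | succ N ih =>
    intro x hlen hx
    have hLred : FreeGroup.reduce x.toWord = x.toWord := FreeGroup.reduce_toWord x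
    have hchain : List.Chain' NC x.toWord := (reduce_eq_self_iff _).mp hLred
    by_cases hcc : List.Chain' NC (x.toWord ++ x.toWord)
    · exact ⟨1, x, by simp, hx, hcc⟩
    · have hLne : x.toWord ≠ [] := fun h => hx (FreeGroup.toWord_eq_nil_iff.mp h)
      have hbad : ¬ ∀ a ∈ x.toWord.getLast?, ∀ b ∈ x.toWord.head?, NC a b := by
        intro hb
        exact hcc (List.isChain_append.mpr ⟨hchain, hchain, hb⟩)
      push_neg at hbad
      obtain ⟨lst, hlst, hd, hhd, hnc⟩ := hbad
      simp only [NC, not_not] at hnc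
      rcases List.eq_nil_or_concat x.toWord with hnil | ⟨M, z, hMl⟩
      · exact absurd hnil hLne
      rw [List.concat_eq_append] at hMl
      have hzlst : z = lst := by
        rw [hMl, List.getLast?_concat] at hlst
        simpa using hlst
      rcases M with _ | ⟨u0, t'⟩
      · rw [hMl] at hhd
        simp at hhd
        rw [← hzlst, hhd] at hnc
        simp at hnc
      have hu0 : u0 = hd := by
        rw [hMl] at hhd
        simpa using hhd
      have hzeq : z = (u0.1, !u0.2) := Prod.ext (hu0 ▸ hzlst ▸ hnc.1) (hu0 ▸ hzlst ▸ hnc.2)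
      have hxmk : FreeGroup.mk x.toWord = x := FreeGroup.mk_toWord
      set u := FreeGroup.mk [u0] with hu
      set y := FreeGroup.mk t' with hy
      have huinv : u⁻¹ = FreeGroup.mk [z] := by
        rw [hu, FreeGroup.inv_mk]
        simp [FreeGroup.invRev, hzeq]
      have hxeq : x = u * y * u⁻¹ := by
        rw [hu, hy, huinv, FreeGroup.mul_mk, FreeGroup.mul_mk, ← hxmk, hMl]
        simp
      have hyne : y ≠ 1 := by
        rintro h1
        rw [h1] at hxeq
        simp at hxeq
        exact hx hxeq
      have ht'chain : List.Chain' NC t' := by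
        apply List.IsChain.infix hchain
        exact ⟨[u0], [z], by rw [hMl]; simp⟩
      have hyword : y.toWord = t' := by
        rw [hy, FreeGroup.toWord_mk, (reduce_eq_self_iff _).mpr ht'chain]
      have hylen : y.toWord.length ≤ N := by
        rw [hyword]
        have : x.toWord.length = t'.length + 2 := by rw [hMl]; simp
        omega
      obtain ⟨w, c, hyw, hc1, hcgood⟩ := ih y hylen hyne
      refine ⟨u * w, c, ?_, hc1, hcgood⟩
      rw [hxeq, hyw]
      group

end CPAux

namespace CPAux
variable {α : Type} [DecidableEq α]

lemma pow_ne_one_of_cr {c : FreeGroup α} (hc : c ≠ 1)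
    (hcc : List.Chain' NC (c.toWord ++ c.toWord)) (k : ℕ) : c ^ (k + 1) ≠ 1 := by
  have hLne : c.toWord ≠ [] := fun h => hc (FreeGroup.toWord_eq_nil_iff.mp h)
  have hchainL : List.Chain' NC c.toWord := (List.isChain_append.mp hcc).1
  have hbdry := (List.isChain_append.mp hcc).2.2
  have key : ∀ j : ℕ, c ^ (j + 1) = FreeGroup.mk ((List.replicate (j+1) c.toWord).flatten) ∧
      List.Chain' NC ((List.replicate (j+1) c.toWord).flatten) := by
    intro j
    induction j with
    | zero =>
      refine ⟨?_, by simpa using hchainL⟩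
      simp [FreeGroup.mk_toWord]
    | succ j ihj =>
      have hrep : (List.replicate (j+1+1) c.toWord).flatten
          = c.toWord ++ (List.replicate (j+1) c.toWord).flatten := by
        rw [List.replicate_succ, List.flatten_cons]
      refine ⟨?_, ?_⟩
      · rw [pow_succ', ihj.1, hrep, ← FreeGroup.mul_mk, FreeGroup.mk_toWord]
      · rw [hrep]
        refine List.isChain_append.mpr ⟨hchainL, ihj.2, ?_⟩
        intro a ha b hb
        refine hbdry a ha b ?_
        rw [List.replicate_succ, List.flatten_cons,
          List.head?_append_of_ne_nil _ hLne] at hb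
        exact hb
  intro h1
  have h2 : ((List.replicate (k+1) c.toWord).flatten) = [] := by
    have := congrArg FreeGroup.toWord ((key k).1.symm.trans h1)
    rwa [FreeGroup.toWord_mk, (reduce_eq_self_iff _).mpr (key k).2,
      FreeGroup.toWord_one] at this
  have h3 : ((List.replicate (k+1) c.toWord).flatten).length = (k+1) * c.toWord.length := by
    simp [List.length_flatten]
  rw [h2] at h3
  simp at h3
  exact hc h3

lemma pow_ne_one {x : FreeGroup α} (hx : x ≠ 1) {k : ℕ} (hk : k ≠ 0) : x ^ k ≠ 1 := by
  obtain ⟨w, c, hxw, hc1, hcc⟩ := exists_cr x.toWord.length x le_rfl hx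
  obtain ⟨j, rfl⟩ : ∃ j, k = j + 1 := ⟨k - 1, by omega⟩
  rw [hxw, conj_pow]
  intro h1
  have : c ^ (j+1) = 1 := by
    have := congrArg (fun t => w⁻¹ * t * w) h1
    simpa [mul_assoc] using this
  exact pow_ne_one_of_cr hc1 hcc j this

end CPAux

namespace CPAux

open Monoid

lemma zpow_ne_one' {α : Type} {x : FreeGroup α} (hx : x ≠ 1) {k : ℤ} (hk : k ≠ 0) :
    x ^ k ≠ 1 := by
  classical
  rcases k with n | n
  · have hn : n ≠ 0 := by simpa using hk
    simpa [zpow_natCast] using pow_ne_one hx hn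
  · rw [zpow_negSucc]
    simp only [ne_eq, inv_eq_one]
    exact pow_ne_one hx (Nat.succ_ne_zero n)

lemma zpow_left_injective' {α : Type} {x : FreeGroup α} (hx : x ≠ 1) :
    Function.Injective (fun k : ℤ => x ^ k) := by
  intro i j hij
  have hij' : x ^ i = x ^ j := hij
  by_contra hne
  have : x ^ (i - j) ≠ 1 := zpow_ne_one' hx (sub_ne_zero.mpr hne)
  apply this
  rw [zpow_sub, hij', mul_inv_cancel]

variable {α β : Type}

@[reducible] def Gi (α β : Type) : Bool → Type
  | true => FreeGroup α
  | false => FreeGroup β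

instance instGroupGi : ∀ b, Group (Gi α β b)
  | true => inferInstanceAs (Group (FreeGroup α))
  | false => inferInstanceAs (Group (FreeGroup β))

def φs (g : FreeGroup α) (h : FreeGroup β) (n m : ℕ) : ∀ b, Multiplicative ℤ →* Gi α β b
  | true => zpowersHom (FreeGroup α) (g ^ n)
  | false => zpowersHom (FreeGroup β) (h ^ m)

section Main

variable (g : FreeGroup α) (h : FreeGroup β) (n m : ℕ)

local notation "P" => PushoutI (φs g h n m)

variable {g h n m}
variable (hg : g ≠ 1) (hh : h ≠ 1) (hn : 1 < n) (hm : 1 < m)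

include hg hn in
lemma phi_inj_true : Function.Injective (φs g h n m true) := by
  classical
  intro z1 z2 hz
  have hgn : g ^ n ≠ 1 := pow_ne_one hg (by omega)
  have := zpow_left_injective' hgn (by simpa [φs, zpowersHom_apply] using hz)
  exact Multiplicative.toAdd.injective this

include hh hm in
lemma phi_inj_false : Function.Injective (φs g h n m false) := by
  classical
  intro z1 z2 hz
  have hhm : h ^ m ≠ 1 := pow_ne_one hh (by omega)
  have := zpow_left_injective' hhm (by simpa [φs, zpowersHom_apply] using hz)
  exact Multiplicative.toAdd.injective this

include hg hh hn hm in
lemma phi_inj : ∀ b, Function.Injective (φs g h n m b)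
  | true => phi_inj_true hg hn
  | false => phi_inj_false hh hm

-- the amalgamation relation in P
lemma base_rel : (PushoutI.of (φ := φs g h n m) true (g ^ n) : P)
    = PushoutI.of (φ := φs g h n m) false (h ^ m) := by
  have h1 := PushoutI.of_apply_eq_base (φs g h n m) true (Multiplicative.ofAdd 1)
  have h2 := PushoutI.of_apply_eq_base (φs g h n m) false (Multiplicative.ofAdd 1)
  have e1 : φs g h n m true (Multiplicative.ofAdd 1) = g ^ n := by
    show (zpowersHom (FreeGroup α) (g ^ n)) _ = _
    rw [zpowersHom_apply]
    simp
  have e2 : φs g h n m false (Multiplicative.ofAdd 1) = h ^ m := by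
    show (zpowersHom (FreeGroup β) (h ^ m)) _ = _
    rw [zpowersHom_apply]
    simp
  rw [e1] at h1
  rw [e2] at h2
  rw [h1, h2]

end Main

end CPAux

namespace CPAux

open Monoid

variable {α β : Type} {g : FreeGroup α} {h : FreeGroup β} {n m : ℕ}

lemma phi_true_apply (z : Multiplicative ℤ) :
    φs g h n m true z = g ^ ((n : ℤ) * z.toAdd) := by
  show (g ^ n) ^ z.toAdd = _
  rw [← zpow_natCast g n, ← zpow_mul]

lemma phi_false_apply (z : Multiplicative ℤ) :
    φs g h n m false z = h ^ ((m : ℤ) * z.toAdd) := by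
  show (h ^ m) ^ z.toAdd = _
  rw [← zpow_natCast h m, ← zpow_mul]

lemma gpow_not_in_range (hg : g ≠ 1) (hn : 1 < n) {c : ℤ} (hc : ¬ (n : ℤ) ∣ c) :
    g ^ c ∉ (φs g h n m true).range := by
  rintro ⟨z, hz⟩
  rw [phi_true_apply] at hz
  have := zpow_left_injective' hg hz
  exact hc ⟨z.toAdd, this.symm⟩

lemma hpow_not_in_range (hh : h ≠ 1) (hm : 1 < m) {c : ℤ} (hc : ¬ (m : ℤ) ∣ c) :
    h ^ c ∉ (φs g h n m false).range := by
  rintro ⟨z, hz⟩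
  rw [phi_false_apply] at hz
  have := zpow_left_injective' hh hz
  exact hc ⟨z.toAdd, this.symm⟩

lemma not_dvd_one_int (hn : 1 < n) : ¬ (n : ℤ) ∣ 1 := by
  intro hdvd
  have := Int.le_of_dvd one_pos hdvd
  omega

lemma not_dvd_nmul_add_one (hn : 1 < n) (a : ℤ) : ¬ (n : ℤ) ∣ ((n : ℤ) * a + 1) := by
  intro hdvd
  have h2 : (n : ℤ) ∣ 1 := (Int.dvd_add_right ⟨a, rfl⟩).mp hdvd
  exact not_dvd_one_int hn h2

lemma g_not_in_range (hg : g ≠ 1) (hn : 1 < n) : g ∉ (φs g h n m true).range := by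
  have := gpow_not_in_range (h := h) (m := m) hg hn (not_dvd_one_int hn)
  simpa using this

lemma h_not_in_range (hh : h ≠ 1) (hm : 1 < m) : h ∉ (φs g h n m false).range := by
  have := hpow_not_in_range (g := g) (n := n) hh hm (not_dvd_one_int hm)
  simpa using this

lemma word_exists (hg : g ≠ 1) (hh : h ≠ 1) (hn : 1 < n) (hm : 1 < m) (k : ℕ) :
    ∃ w : CoprodI.Word (Gi α β),
      PushoutI.Reduced (φs g h n m) w ∧
      w.fstIdx = some false ∧
      PushoutI.ofCoprodI (φ := φs g h n m) w.prod
        = PushoutI.of (φ := φs g h n m) false h *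
          (PushoutI.of (φ := φs g h n m) true g *
           PushoutI.of (φ := φs g h n m) false h) ^ k := by
  induction k with
  | zero =>
    refine ⟨CoprodI.Word.cons (i := false) h CoprodI.Word.empty
      (CoprodI.Word.fstIdx_ne_iff.mpr (fun l hl => by simp [CoprodI.Word.empty] at hl)) hh, ?_, ?_, ?_⟩
    · intro l hl
      simp only [CoprodI.Word.cons_toList, CoprodI.Word.empty, List.mem_singleton] at hl
      subst hl
      exact h_not_in_range hh hm
    · rfl
    · rw [CoprodI.Word.prod_cons, map_mul, PushoutI.ofCoprodI_of]
      simp [CoprodI.Word.prod_empty]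
  | succ k ih =>
    obtain ⟨w, hred, hfst, hprod⟩ := ih
    have hfst1 : w.fstIdx ≠ some true := by rw [hfst]; simp
    set w1 := CoprodI.Word.cons (i := true) g w hfst1 hg with hw1
    have hfst2 : w1.fstIdx ≠ some false := by
      rw [hw1, CoprodI.Word.fstIdx_cons]; simp
    refine ⟨CoprodI.Word.cons (i := false) h w1 hfst2 hh, ?_, ?_, ?_⟩
    · intro l hl
      simp only [CoprodI.Word.cons_toList, hw1, List.mem_cons] at hl
      rcases hl with rfl | rfl | hl
      · exact h_not_in_range hh hm
      · exact g_not_in_range hg hn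
      · exact hred l hl
    · simp
    · rw [CoprodI.Word.prod_cons, map_mul, PushoutI.ofCoprodI_of, hw1,
        CoprodI.Word.prod_cons, map_mul, PushoutI.ofCoprodI_of, hprod, pow_succ']
      group

end CPAux

namespace CPAux
open Monoid

variable {α β : Type} {g : FreeGroup α} {h : FreeGroup β} {n m : ℕ}

lemma pos_case (hg : g ≠ 1) (hh : h ≠ 1) (hn : 1 < n) (hm : 1 < m) (a : ℤ) (k : ℕ) :
    (PushoutI.of (φ := φs g h n m) true (g ^ n)) ^ a *
      (PushoutI.of (φ := φs g h n m) true g *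
       PushoutI.of (φ := φs g h n m) false h) ^ ((k : ℤ) + 1) ≠ 1 := by
  intro heq
  obtain ⟨w, hred, hfst, hprod⟩ := word_exists hg hh hn hm k
  have hA1 : g ^ ((n : ℤ) * a + 1) ≠ 1 := by
    apply zpow_ne_one' hg
    intro h0
    exact not_dvd_nmul_add_one hn a (h0 ▸ dvd_zero _)
  have hfstA : w.fstIdx ≠ some true := by rw [hfst]; simp
  set W := CoprodI.Word.cons (i := true) (g ^ ((n : ℤ) * a + 1)) w hfstA hA1 with hW
  have hWred : PushoutI.Reduced (φs g h n m) W := by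
    intro l hl
    simp only [hW, CoprodI.Word.cons_toList, List.mem_cons] at hl
    rcases hl with rfl | hl
    · exact gpow_not_in_range hg hn (not_dvd_nmul_add_one hn a)
    · exact hred l hl
  have hWprod : PushoutI.ofCoprodI (φ := φs g h n m) W.prod = 1 := by
    rw [hW, CoprodI.Word.prod_cons, map_mul, PushoutI.ofCoprodI_of, hprod]
    rw [← heq]
    have e1 : (PushoutI.of (φ := φs g h n m) true (g ^ n)) ^ a
        = PushoutI.of (φ := φs g h n m) true (g ^ ((n : ℤ) * a)) := by
      rw [← map_zpow, ← zpow_natCast g n, ← zpow_mul]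
    have e2 : ((PushoutI.of (φ := φs g h n m) true g *
        PushoutI.of (φ := φs g h n m) false h) : PushoutI (φs g h n m)) ^ ((k : ℤ) + 1)
        = (PushoutI.of (φ := φs g h n m) true g *
           PushoutI.of (φ := φs g h n m) false h) ^ (k + 1) := by
      rw [show ((k : ℤ) + 1) = ((k + 1 : ℕ) : ℤ) by push_cast; ring, zpow_natCast]
    rw [e1, e2, pow_succ']
    have e3 : PushoutI.of (φ := φs g h n m) true (g ^ ((n : ℤ) * a + 1))
        = PushoutI.of (φ := φs g h n m) true (g ^ ((n : ℤ) * a)) *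
          PushoutI.of (φ := φs g h n m) true g := by
      rw [← map_mul]
      congr 1
      rw [zpow_add, zpow_one]
    rw [e3]
    simp [mul_assoc]
  have hWempty : W = CoprodI.Word.empty :=
    PushoutI.Reduced.eq_empty_of_mem_range (phi_inj hg hh hn hm) hWred
      (hWprod ▸ ⟨1, map_one _⟩)
  have : W.toList = [] := by rw [hWempty]; rfl
  rw [hW] at this
  simp at this

lemma commute_key (hg : g ≠ 1) (hh : h ≠ 1) (hn : 1 < n) (hm : 1 < m) :
    Commute (PushoutI.of (φ := φs g h n m) true (g ^ n))
      (PushoutI.of (φ := φs g h n m) true g *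
       PushoutI.of (φ := φs g h n m) false h) := by
  show _ * _ = _ * _
  calc PushoutI.of (φ := φs g h n m) true (g ^ n) *
        (PushoutI.of (φ := φs g h n m) true g * PushoutI.of (φ := φs g h n m) false h)
      = PushoutI.of (φ := φs g h n m) true (g ^ n * g) *
        PushoutI.of (φ := φs g h n m) false h := by rw [map_mul]; group
    _ = PushoutI.of (φ := φs g h n m) true g *
        (PushoutI.of (φ := φs g h n m) true (g ^ n) *
         PushoutI.of (φ := φs g h n m) false h) := by
        rw [((Commute.refl g).pow_left n).eq, map_mul]; group
    _ = PushoutI.of (φ := φs g h n m) true g *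
        (PushoutI.of (φ := φs g h n m) false (h ^ m * h)) := by
        rw [base_rel, map_mul]
    _ = PushoutI.of (φ := φs g h n m) true g *
        (PushoutI.of (φ := φs g h n m) false h *
         PushoutI.of (φ := φs g h n m) false (h ^ m)) := by
        rw [((Commute.refl h).pow_left m).eq, map_mul]
    _ = (PushoutI.of (φ := φs g h n m) true g * PushoutI.of (φ := φs g h n m) false h) *
        PushoutI.of (φ := φs g h n m) true (g ^ n) := by
        rw [base_rel]; group

lemma pushout_free (hg : g ≠ 1) (hh : h ≠ 1) (hn : 1 < n) (hm : 1 < m) (a b : ℤ)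
    (heq : (PushoutI.of (φ := φs g h n m) true (g ^ n)) ^ a *
      (PushoutI.of (φ := φs g h n m) true g *
       PushoutI.of (φ := φs g h n m) false h) ^ b = 1) :
    a = 0 ∧ b = 0 := by
  classical
  set X1 := PushoutI.of (φ := φs g h n m) true (g ^ n) with hX1
  set XY := PushoutI.of (φ := φs g h n m) true g *
    PushoutI.of (φ := φs g h n m) false h with hXY
  have hcomm : Commute X1 XY := commute_key hg hh hn hm
  rcases lt_trichotomy b 0 with hb | rfl | hb
  · exfalso
    have hinv : X1 ^ (-a) * XY ^ (-b) = 1 := by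
      have h1 : (X1 ^ a * XY ^ b)⁻¹ = 1 := by rw [heq]; simp
      rw [mul_inv_rev, ← zpow_neg, ← zpow_neg] at h1
      have h2 := (hcomm.zpow_zpow (-a) (-b)).eq
      calc X1 ^ (-a) * XY ^ (-b) = (XY ^ (-b) * X1 ^ (-a))⁻¹⁻¹ := by
            rw [inv_inv, ← h2]
        _ = 1 := by rw [h1]; simp
    obtain ⟨k, hk⟩ : ∃ k : ℕ, -b = (k : ℤ) + 1 := ⟨(-b - 1).toNat, by omega⟩
    rw [hk] at hinv
    exact pos_case hg hh hn hm (-a) k hinv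
  · refine ⟨?_, rfl⟩
    rw [zpow_zero, mul_one] at heq
    have h1 : PushoutI.of (φ := φs g h n m) true ((g ^ n) ^ a) = 1 := by
      rw [map_zpow]; exact heq
    have h2 : (g ^ n) ^ a = 1 :=
      PushoutI.of_injective (phi_inj hg hh hn hm) true (by rw [h1, map_one])
    by_contra ha
    exact zpow_ne_one' (pow_ne_one hg (by omega)) ha h2
  · exfalso
    obtain ⟨k, hk⟩ : ∃ k : ℕ, b = (k : ℤ) + 1 := ⟨(b - 1).toNat, by omega⟩
    rw [hk] at heq
    exact pos_case hg hh hn hm a k heq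

end CPAux

open CPAux Monoid in
/-- In the cyclically pinched one-relator group
`G = F₁ *_{U = V} F₂ = ⟨F₁ ⊔ F₂ ; gⁿ = hᵐ⟩`, with `g ≠ 1` in the free group `F₁`,
`h ≠ 1` in the free group `F₂` and `n, m > 1`, the subgroup generated by `gⁿ` and
`g h` is free abelian of rank 2. -/
theorem cyclically_pinched_zsq_subgroup {α β : Type} (g : FreeGroup α) (h : FreeGroup β)
    (hg : g ≠ 1) (hh : h ≠ 1) (n m : ℕ) (hn : 1 < n) (hm : 1 < m) :
    let ι₁ : FreeGroup α →* FreeGroup (α ⊕ β) := FreeGroup.map Sum.inl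
    let ι₂ : FreeGroup β →* FreeGroup (α ⊕ β) := FreeGroup.map Sum.inr
    let rels : Set (FreeGroup (α ⊕ β)) := {ι₁ (g ^ n) * (ι₂ (h ^ m))⁻¹}
    let π : FreeGroup (α ⊕ β) →* PresentedGroup rels := PresentedGroup.mk rels
    let H : Subgroup (PresentedGroup rels) :=
      Subgroup.closure {π (ι₁ g) ^ n, π (ι₁ g) * π (ι₂ h)}
    Nonempty (H ≃* Multiplicative (ℤ × ℤ)) := by
  intro ι₁ ι₂ rels π H
  classical
  set x : PresentedGroup rels := π (ι₁ g) ^ n with hxdef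
  set y : PresentedGroup rels := π (ι₁ g) * π (ι₂ h) with hydef
  -- the map to the amalgamated product
  set f : α ⊕ β → PushoutI (φs g h n m) :=
    Sum.elim (fun a => PushoutI.of (φ := φs g h n m) true (FreeGroup.of a))
             (fun b => PushoutI.of (φ := φs g h n m) false (FreeGroup.of b)) with hf
  have hlift1 : ∀ u : FreeGroup α,
      FreeGroup.lift f (ι₁ u) = PushoutI.of (φ := φs g h n m) true u := by
    have : (FreeGroup.lift f).comp ι₁ = PushoutI.of (φ := φs g h n m) true := by
      apply FreeGroup.ext_hom
      intro a
      simp only [MonoidHom.comp_apply]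
      rw [show ι₁ (FreeGroup.of a) = FreeGroup.of (Sum.inl a : α ⊕ β) from by simp [ι₁],
        FreeGroup.lift_apply_of]
      simp only [hf, Sum.elim_inl, Sum.elim_inr]
    exact fun u => DFunLike.congr_fun this u
  have hlift2 : ∀ u : FreeGroup β,
      FreeGroup.lift f (ι₂ u) = PushoutI.of (φ := φs g h n m) false u := by
    have : (FreeGroup.lift f).comp ι₂ = PushoutI.of (φ := φs g h n m) false := by
      apply FreeGroup.ext_hom
      intro b
      simp only [MonoidHom.comp_apply]
      rw [show ι₂ (FreeGroup.of b) = FreeGroup.of (Sum.inr b : α ⊕ β) from by simp [ι₂],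
        FreeGroup.lift_apply_of]
      simp only [hf, Sum.elim_inl, Sum.elim_inr]
    exact fun u => DFunLike.congr_fun this u
  have hrelsψ : ∀ r ∈ rels, FreeGroup.lift f r = 1 := by
    intro r hr
    rw [Set.mem_singleton_iff] at hr
    subst hr
    rw [map_mul, map_inv, hlift1, hlift2, base_rel, mul_inv_cancel]
  set ψ : PresentedGroup rels →* PushoutI (φs g h n m) :=
    PresentedGroup.toGroup hrelsψ with hψ
  have hψπ : ∀ w : FreeGroup (α ⊕ β), ψ (π w) = FreeGroup.lift f w := fun _ => rfl
  -- the relation in the presented group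
  have hrel : π (ι₁ g) ^ n = π (ι₂ h) ^ m := by
    have h0 : π (ι₁ (g ^ n) * (ι₂ (h ^ m))⁻¹) = 1 := by
      apply (QuotientGroup.eq_one_iff _).mpr
      exact Subgroup.subset_normalClosure (by simp [rels])
    rw [map_mul, map_inv, mul_inv_eq_one] at h0
    simp only [map_pow] at h0
    exact h0
  have hcommxy : Commute x y := by
    have c1 : Commute x (π (ι₁ g)) := (Commute.refl (π (ι₁ g))).pow_left n
    have c2 : Commute x (π (ι₂ h)) := by
      rw [hxdef, hrel]
      exact (Commute.refl (π (ι₂ h))).pow_left m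
    exact c1.mul_right c2
  -- the homomorphism from ℤ²
  set θ : Multiplicative (ℤ × ℤ) →* PresentedGroup rels :=
    { toFun := fun p => x ^ (Multiplicative.toAdd p).1 * y ^ (Multiplicative.toAdd p).2
      map_one' := by simp
      map_mul' := by
        intro p q
        have hpq1 : (Multiplicative.toAdd (p * q)).1
            = (Multiplicative.toAdd p).1 + (Multiplicative.toAdd q).1 := rfl
        have hpq2 : (Multiplicative.toAdd (p * q)).2
            = (Multiplicative.toAdd p).2 + (Multiplicative.toAdd q).2 := rfl
        rw [hpq1, hpq2, zpow_add, zpow_add]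
        have h2 := (hcommxy.zpow_zpow (Multiplicative.toAdd q).1
          (Multiplicative.toAdd p).2).eq
        calc x ^ (Multiplicative.toAdd p).1 * x ^ (Multiplicative.toAdd q).1 *
              (y ^ (Multiplicative.toAdd p).2 * y ^ (Multiplicative.toAdd q).2)
            = x ^ (Multiplicative.toAdd p).1 * ((x ^ (Multiplicative.toAdd q).1 *
              y ^ (Multiplicative.toAdd p).2) * y ^ (Multiplicative.toAdd q).2) := by
              group
          _ = x ^ (Multiplicative.toAdd p).1 * ((y ^ (Multiplicative.toAdd p).2 *
              x ^ (Multiplicative.toAdd q).1) * y ^ (Multiplicative.toAdd q).2) := by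
              rw [h2]
          _ = x ^ (Multiplicative.toAdd p).1 * y ^ (Multiplicative.toAdd p).2 *
              (x ^ (Multiplicative.toAdd q).1 * y ^ (Multiplicative.toAdd q).2) := by
              group } with hθ
  have hθapply : ∀ p : ℤ × ℤ, θ (Multiplicative.ofAdd p) = x ^ p.1 * y ^ p.2 := fun _ => rfl
  -- images under ψ
  have hψx : ψ x = PushoutI.of (φ := φs g h n m) true (g ^ n) := by
    rw [hxdef, map_pow, hψπ, hlift1, ← map_pow]
  have hψy : ψ y = PushoutI.of (φ := φs g h n m) true g *
      PushoutI.of (φ := φs g h n m) false h := by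
    rw [hydef, map_mul, hψπ, hψπ, hlift1, hlift2]
  -- injectivity of θ
  have hθinj : Function.Injective θ := by
    rw [injective_iff_map_eq_one]
    intro p hp
    have hp' : x ^ (Multiplicative.toAdd p).1 * y ^ (Multiplicative.toAdd p).2 = 1 := hp
    have hψp : (PushoutI.of (φ := φs g h n m) true (g ^ n)) ^ (Multiplicative.toAdd p).1 *
        (PushoutI.of (φ := φs g h n m) true g *
         PushoutI.of (φ := φs g h n m) false h) ^ (Multiplicative.toAdd p).2 = 1 := by
      have := congrArg ψ hp'
      rwa [map_mul, map_zpow, map_zpow, hψx, hψy, map_one] at this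
    obtain ⟨ha, hb⟩ := pushout_free hg hh hn hm _ _ hψp
    have hp0 : Multiplicative.toAdd p = (0, 0) := Prod.ext ha hb
    have := congrArg Multiplicative.ofAdd hp0
    exact this
  -- θ lands in H
  have hxH : x ∈ H := Subgroup.subset_closure (by left; rfl)
  have hyH : y ∈ H := Subgroup.subset_closure (by right; rfl)
  have hθmem : ∀ p : Multiplicative (ℤ × ℤ), θ p ∈ H := by
    intro p
    exact mul_mem (zpow_mem hxH _) (zpow_mem hyH _)
  set θ' : Multiplicative (ℤ × ℤ) →* H := θ.codRestrict H hθmem with hθ'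
  have hθ'inj : Function.Injective θ' := by
    intro p q hpq
    apply hθinj
    exact congrArg Subtype.val hpq
  have hθ'surj : Function.Surjective θ' := by
    rintro ⟨z, hz⟩
    have : ∃ p : Multiplicative (ℤ × ℤ), θ p = z := by
      refine Subgroup.closure_induction (k := {x, y})
        (p := fun z _ => ∃ p : Multiplicative (ℤ × ℤ), θ p = z) ?_ ?_ ?_ ?_ hz
      · intro w hw
        rcases hw with rfl | rfl
        · exact ⟨Multiplicative.ofAdd (1, 0), by rw [hθapply]; simp⟩
        · exact ⟨Multiplicative.ofAdd (0, 1), by rw [hθapply]; simp⟩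
      · exact ⟨1, map_one θ⟩
      · rintro u v _ _ ⟨p, rfl⟩ ⟨q, rfl⟩
        exact ⟨p * q, map_mul θ p q⟩
      · rintro u _ ⟨p, rfl⟩
        exact ⟨p⁻¹, map_inv θ p⟩
    obtain ⟨p, hp⟩ := this
    exact ⟨p, Subtype.ext hp⟩
  exact ⟨(MulEquiv.ofBijective θ' ⟨hθ'inj, hθ'surj⟩).symm⟩
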